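/- arXiv:1205.6433 — 6 statements merged into one kernel-verified Lean document; each statement's English description precedes it below -/
import Mathlib

section
/- Let F be a finite field with q = Fintype.card F, let α be an element of F that generates the unit group Fˣ (every nonzero element of F is a power of α), and let f : F → ZMod (q − 1) be a discrete logarithm for α, i.e., for every x ∈ F with x ≠ 0 one has α ^ (f x).val = x. Then f has the distinct difference (Costas) property: for all a, b, h ∈ F with h ≠ 0, a ≠ 0, b ≠ 0, a + h ≠ 0, and b + h ≠ 0, if f (a + h) − f a = f (b + h) − f b (in ZMod (q − 1)) then a = b. -/
/-- The distinct difference (Costas) property for the Welch discrete-logarithm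
construction over a finite field `F`. -/
theorem welch_costas_property
    (F : Type*) [Field F] [Fintype F] (α : F)
    (hα : ∀ x : F, x ≠ 0 → ∃ k : ℕ, α ^ k = x)
    (f : F → ZMod (Fintype.card F - 1))
    (hf : ∀ x : F, x ≠ 0 → α ^ (f x).val = x) :
    ∀ a b h : F, h ≠ 0 → a ≠ 0 → b ≠ 0 → a + h ≠ 0 → b + h ≠ 0 →
      f (a + h) - f a = f (b + h) - f b → a = b := by
  intro a b h hh ha hb hah hbh heq
  by_cases hα0 : α = 0
  · -- degenerate case: every nonzero element equals 1
    have key : ∀ x : F, x ≠ 0 → x = 1 := by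
      intro x hx
      have := hf x hx
      rw [hα0] at this
      rcases Nat.eq_zero_or_pos (f x).val with h0 | hpos
      · rw [h0, pow_zero] at this; exact this.symm
      · rw [zero_pow hpos.ne'] at this
        exact absurd this.symm hx
    rw [key a ha, key b hb]
  · haveI : NeZero (Fintype.card F - 1) :=
      ⟨by have := Fintype.one_lt_card (α := F); omega⟩
    have h1 : α ^ (Fintype.card F - 1) = 1 :=
      FiniteField.pow_card_sub_one_eq_one α hα0
    have hmod : ∀ k : ℕ, α ^ (k % (Fintype.card F - 1)) = α ^ k := by
      intro k
      conv_rhs => rw [← Nat.mod_add_div k (Fintype.card F - 1)]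
      rw [pow_add, pow_mul, h1, one_pow, mul_one]
    have key : ∀ x : F, x ≠ 0 → x + h ≠ 0 →
        α ^ (f (x + h) - f x).val * x = x + h := by
      intro x hx hxh
      calc α ^ (f (x + h) - f x).val * x
          = α ^ (f (x + h) - f x).val * α ^ (f x).val := by rw [hf x hx]
        _ = α ^ ((f (x + h) - f x).val + (f x).val) := (pow_add α _ _).symm
        _ = α ^ (((f (x + h) - f x) + f x).val) := by
              rw [ZMod.val_add, hmod]
        _ = x + h := by rw [sub_add_cancel]; exact hf _ hxh
    have ka := key a ha hah
    have kb := key b hb hbh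
    rw [heq] at ka
    set c := α ^ (f (b + h) - f b).val with hc
    have hca : (c - 1) * a = h := by ring_nf; linear_combination ka
    have hcb : (c - 1) * b = h := by ring_nf; linear_combination kb
    have hc1 : c - 1 ≠ 0 := by
      intro h0
      rw [h0, zero_mul] at hca
      exact hh hca.symm
    have : (c - 1) * a = (c - 1) * b := by rw [hca, hcb]
    exact mul_left_cancel₀ hc1 this
end

section
/- Let p be a prime and set n = p^2 − 1. If f : ZMod p × ZMod p → ZMod n has the periodic Costas property and x₁, x₂ ∈ ZMod p are both nonzero, then the row-and-column multiplication G1, namely the function g : ZMod p × ZMod p → ZMod n defined by g (i, j) = f (x₁ * i, x₂ * j), also has the periodic Costas property. -/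
/-- The periodic Costas (distinct difference) property for a three-dimensional
array `f : ℤ_p × ℤ_p → ℤ_{p^2 - 1}`. -/
def PeriodicCostas2 (p n : ℕ) (f : ZMod p × ZMod p → ZMod n) : Prop :=
  ∀ h : ZMod p × ZMod p, h ≠ 0 → ∀ a b : ZMod p × ZMod p,
    a ≠ 0 → b ≠ 0 → a + h ≠ 0 → b + h ≠ 0 →
    f (a + h) - f a = f (b + h) - f b → a = b

/-- The row-and-column multiplication `G1` applied to a three-dimensional
periodic Costas array over `ℤ_p × ℤ_p` generates a new three-dimensional
periodic Costas array. -/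
theorem G1_periodicCostas
    (p : ℕ) (hp : p.Prime)
    (f : ZMod p × ZMod p → ZMod (p ^ 2 - 1))
    (hf : PeriodicCostas2 p (p ^ 2 - 1) f)
    (x₁ x₂ : ZMod p) (hx₁ : x₁ ≠ 0) (hx₂ : x₂ ≠ 0) :
    PeriodicCostas2 p (p ^ 2 - 1) (fun ij => f (x₁ * ij.1, x₂ * ij.2)) := by
  haveI := Fact.mk hp
  intro h hh a b ha hb hah hbh heq
  set φ : ZMod p × ZMod p → ZMod p × ZMod p := fun v => (x₁ * v.1, x₂ * v.2) with hφ
  have hzero : ∀ v, φ v = 0 ↔ v = 0 := by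
    intro v
    simp only [hφ, Prod.ext_iff, Prod.fst_zero, Prod.snd_zero,
      mul_eq_zero, hx₁, hx₂, false_or]
  have hadd : ∀ v w, φ (v + w) = φ v + φ w := by
    intro v w
    simp [hφ, Prod.ext_iff, mul_add]
  have key := hf (φ h) (fun H => hh ((hzero h).mp H)) (φ a) (φ b)
    (fun H => ha ((hzero a).mp H)) (fun H => hb ((hzero b).mp H))
    (by rw [← hadd]; exact fun H => hah ((hzero _).mp H))
    (by rw [← hadd]; exact fun H => hbh ((hzero _).mp H))
    (by rw [← hadd, ← hadd]; exact heq)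
  have : (φ a).1 = (φ b).1 ∧ (φ a).2 = (φ b).2 := Prod.ext_iff.mp key
  exact Prod.ext (mul_left_cancel₀ hx₁ this.1) (mul_left_cancel₀ hx₂ this.2)
end

section
/- Let p be a prime, m ≥ 1, and set n = p^m − 1. If f : (Fin m → ZMod p) → ZMod n has the periodic Costas property and x : Fin m → ZMod p satisfies x i ≠ 0 for every i, then the multiplication permutation G1, namely the function g defined by g a = f (fun i ↦ x i * a i), also has the periodic Costas property. -/
/-- The periodic Costas (distinct difference) property for a multidimensional
array `f : (ℤ_p)^m → ℤ_{p^m - 1}`. -/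
def PeriodicCostas (p m n : ℕ) (f : (Fin m → ZMod p) → ZMod n) : Prop :=
  ∀ h : Fin m → ZMod p, h ≠ 0 → ∀ a b : Fin m → ZMod p,
    a ≠ 0 → b ≠ 0 → a + h ≠ 0 → b + h ≠ 0 →
    f (a + h) - f a = f (b + h) - f b → a = b

/-- The multiplication permutation `G1` applied to an `(m+1)`-dimensional
periodic Costas array over `(ℤ_p)^m` generates a new `(m+1)`-dimensional
periodic Costas array. -/
theorem G1_general_periodicCostas
    (p m : ℕ) (hp : p.Prime) (hm : 1 ≤ m)
    (f : (Fin m → ZMod p) → ZMod (p ^ m - 1))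
    (hf : PeriodicCostas p m (p ^ m - 1) f)
    (x : Fin m → ZMod p) (hx : ∀ i, x i ≠ 0) :
    PeriodicCostas p m (p ^ m - 1) (fun a => f (fun i => x i * a i)) := by
  haveI : Fact p.Prime := ⟨hp⟩
  intro h hh a b ha hb hah hbh heq
  have key : ∀ v : Fin m → ZMod p, v ≠ 0 → (fun i => x i * v i) ≠ 0 := by
    intro v hv hcon
    apply hv
    funext i
    have := congrFun hcon i
    simp only [Pi.zero_apply] at this ⊢
    exact (mul_eq_zero.mp this).resolve_left (hx i)
  have hdist : ∀ v w : Fin m → ZMod p,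
      (fun i => x i * (v + w) i) = (fun i => x i * v i) + (fun i => x i * w i) := by
    intro v w; funext i; simp [mul_add]
  have := hf (fun i => x i * h i) (key h hh) (fun i => x i * a i) (fun i => x i * b i)
    (key a ha) (key b hb)
    (by rw [← hdist]; exact key _ hah) (by rw [← hdist]; exact key _ hbh)
    (by rw [← hdist, ← hdist]; simpa using heq)
  funext i
  have := congrFun this i
  exact mul_left_cancel₀ (hx i) this
end

section
/- Let p be a prime and set n = p^2 − 1. If f : ZMod p × ZMod p → ZMod n has the periodic Costas property and x₁, x₂ ∈ ZMod p satisfy x₁ * x₂ ≠ 1 (so that the shear map is a permutation of ZMod p × ZMod p), then the row-and-column shear G2, namely the function g defined by g (i, j) = f (i + x₂ * j, j + x₁ * i), also has the periodic Costas property. -/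
/-- The row-and-column shear `G2` applied to a three-dimensional periodic
Costas array over `ℤ_p × ℤ_p` generates a new three-dimensional periodic
Costas array. -/
theorem G2_periodicCostas
    (p : ℕ) (hp : p.Prime)
    (f : ZMod p × ZMod p → ZMod (p ^ 2 - 1))
    (hf : PeriodicCostas2 p (p ^ 2 - 1) f)
    (x₁ x₂ : ZMod p) (hx : x₁ * x₂ ≠ 1) :
    PeriodicCostas2 p (p ^ 2 - 1)
      (fun ij => f (ij.1 + x₂ * ij.2, ij.2 + x₁ * ij.1)) := by
  haveI : Fact p.Prime := ⟨hp⟩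
  set T : ZMod p × ZMod p → ZMod p × ZMod p :=
    fun ij => (ij.1 + x₂ * ij.2, ij.2 + x₁ * ij.1) with hT
  have Tadd : ∀ u v, T (u + v) = T u + T v := by
    intro u v
    simp only [hT, Prod.fst_add, Prod.snd_add, Prod.mk_add_mk]
    ring_nf
  have Tzero : ∀ v, T v = 0 → v = 0 := by
    intro v hv
    have h1 : v.1 + x₂ * v.2 = 0 := congrArg Prod.fst hv
    have h2 : v.2 + x₁ * v.1 = 0 := congrArg Prod.snd hv
    have hj : v.2 = -x₁ * v.1 := by linear_combination h2
    have : v.1 * (1 - x₂ * x₁) = 0 := by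
      rw [hj] at h1; linear_combination h1
    have hne : (1 : ZMod p) - x₂ * x₁ ≠ 0 := by
      rw [mul_comm]; exact sub_ne_zero.2 fun he => hx he.symm
    have h1' : v.1 = 0 := by
      rcases mul_eq_zero.1 this with h | h
      · exact h
      · exact absurd h hne
    have h2' : v.2 = 0 := by rw [hj, h1', mul_zero]
    exact Prod.ext h1' h2'
  have Tinj : ∀ u v, T u = T v → u = v := by
    intro u v huv
    have hs : T (u - v) = 0 := by
      have h1 := Tadd (u - v) v
      simp only [sub_add_cancel] at h1
      rw [huv] at h1
      have : T (u - v) = T v - T v := by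
        rw [eq_sub_iff_add_eq, ← h1]
      simpa using this
    exact sub_eq_zero.1 (Tzero _ hs)
  intro h hh a b ha hb hah hbh heq
  have hTne : ∀ v, v ≠ 0 → T v ≠ 0 := fun v hv hc => hv (Tzero v hc)
  have key := hf (T h) (hTne h hh) (T a) (T b) (hTne a ha) (hTne b hb)
    (by rw [← Tadd]; exact hTne _ hah) (by rw [← Tadd]; exact hTne _ hbh)
    (by rw [← Tadd, ← Tadd]; exact heq)
  exact Tinj a b key
end

section
/- Let p be a prime, F a field with CharP F p, and α ∈ F an element not in the image of the canonical ring map ZMod p → F (equivalently, 1 and α are linearly independent over ZMod p). If x₁, x₂ ∈ ZMod p satisfy x₁ * x₂ ≠ 1, then the map from ZMod p × ZMod p to F sending (i, j) to ((i + x₂ * j : ZMod p) : F) * α + ((j + x₁ * i : ZMod p) : F) is injective; in particular, if ((i + x₂ * j) : F) * α + ((j + x₁ * i) : F) = ((i' + x₂ * j') : F) * α + ((j' + x₁ * i') : F) then (i, j) = (i', j'). -/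
/-- Key injectivity step for the shear `G2`: if `α` lies outside the prime
subfield of `F` and `x₁ * x₂ ≠ 1`, then the shear map
`(i, j) ↦ (i + x₂ j) α + (j + x₁ i)` from `ℤ_p × ℤ_p` into `F` is injective. -/
theorem shear_map_injective
    (p : ℕ) (hp : p.Prime)
    (F : Type*) [Field F] [CharP F p]
    (α : F) (hα : ∀ c : ZMod p, ZMod.castHom (dvd_refl p) F c ≠ α)
    (x₁ x₂ : ZMod p) (hx : x₁ * x₂ ≠ 1) :
    Function.Injective (fun ij : ZMod p × ZMod p =>
      (ZMod.castHom (dvd_refl p) F (ij.1 + x₂ * ij.2)) * α +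
      (ZMod.castHom (dvd_refl p) F (ij.2 + x₁ * ij.1))) := by
  haveI : Fact p.Prime := ⟨hp⟩
  set f := ZMod.castHom (dvd_refl p) F with hf
  have hinj : Function.Injective f := f.injective
  rintro ⟨i, j⟩ ⟨i', j'⟩ h
  simp only at h
  -- key: f c * α + f d = 0 → c = 0 ∧ d = 0
  have key : ∀ c d : ZMod p, f c * α + f d = 0 → c = 0 ∧ d = 0 := by
    intro c d hcd
    by_cases hc : c = 0
    · subst hc
      simp at hcd
      exact ⟨rfl, hinj (by simpa using hcd)⟩
    · exfalso
      apply hα (-d / c)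
      have hfc : f c ≠ 0 := fun h0 => hc (hinj (by simpa using h0))
      rw [map_div₀, map_neg, div_eq_iff hfc]
      linear_combination -hcd
  have h0 : f ((i - i') + x₂ * (j - j')) * α + f ((j - j') + x₁ * (i - i')) = 0 := by
    simp only [map_add, map_sub, map_mul] at h ⊢
    linear_combination h
  obtain ⟨h1, h2⟩ := key _ _ h0
  have hv : j - j' = 0 := by
    have : (1 - x₁ * x₂) * (j - j') = 0 := by linear_combination h2 - x₁ * h1
    rcases mul_eq_zero.mp this with h | h
    · exact absurd (by linear_combination -h) hx
    · exact h
  have hu : i - i' = 0 := by linear_combination h1 - x₂ * hv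
  ext <;> [linear_combination hu; linear_combination hv]
end

section
/- Let p be a prime, m ≥ 1, set n = p^m − 1, and let M be an m × m matrix over ZMod p with M i i = 1 for every index i and with invertible determinant (IsUnit M.det). If f : (Fin m → ZMod p) → ZMod n has the periodic Costas property, then the shear permutation G2, namely the function g defined by g a = f (M.mulVec a), also has the periodic Costas property. -/
/-- The shear permutation `G2`, given by an invertible matrix `M` over `ℤ_p`
with all diagonal entries equal to `1`, applied to an `(m+1)`-dimensional
periodic Costas array over `(ℤ_p)^m` generates a new `(m+1)`-dimensional
periodic Costas array. -/
theorem G2_general_periodicCostas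
    (p m : ℕ) (hp : p.Prime) (hm : 1 ≤ m)
    (M : Matrix (Fin m) (Fin m) (ZMod p))
    (hdiag : ∀ i, M i i = 1) (hdet : IsUnit M.det)
    (f : (Fin m → ZMod p) → ZMod (p ^ m - 1))
    (hf : PeriodicCostas p m (p ^ m - 1) f) :
    PeriodicCostas p m (p ^ m - 1) (fun a => f (M.mulVec a)) := by
  have hinj : Function.Injective M.mulVec := by
    intro x y hxy
    have := congrArg (fun v => (M⁻¹).mulVec v) hxy
    simpa [Matrix.mulVec_mulVec, Matrix.nonsing_inv_mul M hdet] using this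
  intro h hh a b ha hb hah hbh heq
  have hne0 : ∀ x : Fin m → ZMod p, x ≠ 0 → M.mulVec x ≠ 0 := by
    intro x hx hx0
    exact hx (hinj (by simpa using hx0))
  have key := hf (M.mulVec h) (hne0 h hh) (M.mulVec a) (M.mulVec b)
    (hne0 a ha) (hne0 b hb)
    (by rw [← Matrix.mulVec_add]; exact hne0 _ hah)
    (by rw [← Matrix.mulVec_add]; exact hne0 _ hbh)
    (by simpa [Matrix.mulVec_add] using heq)
  exact hinj key
end
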